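/- Let A be a real Banach algebra (a complete normed ring that is a normed ℝ-algebra) with unit. Let K : ℝ → A be continuous; let U : ℝ → A be differentiable with U(0) = 1, U′(t) = K(t)·U(t), and U(t) invertible for every t; and let H : ℝ → A be differentiable with H′(t) = K(t)·H(t) − H(t)·K(t) for all t. Fix any f ∈ A and any real number ε, and set Q_t(f) = U(t)·f·U(t)⁻¹. Then for all t ∈ ℝ: H(t)·Q_t(f) − ε·(Q_t(f)·H(t)) = Q_t( H(0)·f − ε·(f·H(0)) ). In particular (taking ε = ±1 according to the parity of f), the conjugation isomorphisms Q_t intertwine the differentials: D^{H_t}(Q_t(f)) = Q_t(D^{H_0}(f)). -/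

import Mathlib

/-- Invariance of the Hamiltonian differential under conjugation.  In a real Banach
algebra with unit, let `K : ℝ → A` be continuous; let `U : ℝ → A` be differentiable with
`U 0 = 1`, `U' t = K t * U t`, and `U t` a unit for all `t`; and let `H : ℝ → A` be
differentiable satisfying the Lax equation `H' t = K t * H t - H t * K t`.  For any
`f ∈ A` and any real sign `ε`, setting `Q_t f = U t * f * (U t)⁻¹`, one has
`H t * Q_t f - ε • (Q_t f * H t) = Q_t (H 0 * f - ε • (f * H 0))` for all `t`; i.e. the
conjugation isomorphisms `Q_t` intertwine the differentials: `D^{H_t}(Q_t f) = Q_t (D^{H_0} f)`. -/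
theorem conjugation_intertwines_differentials
    {A : Type*} [NormedRing A] [NormedAlgebra ℝ A] [CompleteSpace A]
    (K U H : ℝ → A) (hK : Continuous K)
    (hU0 : U 0 = 1)
    (hU : ∀ t : ℝ, HasDerivAt U (K t * U t) t)
    (hUunit : ∀ t : ℝ, IsUnit (U t))
    (hH : ∀ t : ℝ, HasDerivAt H (K t * H t - H t * K t) t)
    (f : A) (ε : ℝ) :
    ∀ t : ℝ,
      H t * (U t * f * Ring.inverse (U t))
          - ε • ((U t * f * Ring.inverse (U t)) * H t)
        = U t * (H 0 * f - ε • (f * H 0)) * Ring.inverse (U t) := by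
  set V : ℝ → A := fun t => Ring.inverse (U t) with hV
  have hVU : ∀ t, V t * U t = 1 := fun t => Ring.inverse_mul_cancel _ (hUunit t)
  have hUV : ∀ t, U t * V t = 1 := fun t => Ring.mul_inverse_cancel _ (hUunit t)
  have hVderiv : ∀ t : ℝ, HasDerivAt V (-(V t * (K t * U t) * V t)) t := by
    intro t
    obtain ⟨u, hu⟩ := hUunit t
    have h1 : HasFDerivAt Ring.inverse
        (-(ContinuousLinearMap.mulLeftRight ℝ A ↑u⁻¹ ↑u⁻¹)) (U t) := by
      rw [← hu]; exact hasFDerivAt_ringInverse u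
    have h2 := h1.comp_hasDerivAt t (hU t)
    have hinv : (↑u⁻¹ : A) = V t := by
      rw [show V t = Ring.inverse (U t) from rfl, ← hu]; simp
    simp [hinv] at h2; exact h2
  -- G t := V t * (H t * U t) is constant
  have hGderiv : ∀ t : ℝ, HasDerivAt (fun t => V t * (H t * U t)) 0 t := by
    intro t
    have h := (hVderiv t).mul ((hH t).mul (hU t))
    convert h using 1
    · rfl
    have key : V t * (K t * U t) * V t = V t * K t := by
      calc V t * (K t * U t) * V t = V t * K t * (U t * V t) := by noncomm_ring
        _ = V t * K t := by rw [hUV]; noncomm_ring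
    rw [key]
    simp only [Pi.mul_apply]
    noncomm_ring
  have hGconst : ∀ t : ℝ, V t * (H t * U t) = H 0 := by
    intro t
    have h := is_const_of_deriv_eq_zero (f := fun t => V t * (H t * U t))
      (fun s => (hGderiv s).differentiableAt) (fun s => (hGderiv s).deriv) t 0
    rw [h]
    simp [hV, hU0]
  intro t
  have hHt : H t = U t * H 0 * V t := by
    have hG := hGconst t
    calc H t = (U t * V t) * H t * (U t * V t) := by rw [hUV]; noncomm_ring
      _ = U t * (V t * (H t * U t)) * V t := by noncomm_ring
      _ = U t * H 0 * V t := by rw [hG]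
  rw [hHt]
  have e1 : U t * H 0 * V t * (U t * f * V t) = U t * (H 0 * f) * V t := by
    calc U t * H 0 * V t * (U t * f * V t)
        = U t * H 0 * (V t * U t) * f * V t := by noncomm_ring
      _ = _ := by rw [hVU]; noncomm_ring
  have e2 : U t * f * V t * (U t * H 0 * V t) = U t * (f * H 0) * V t := by
    calc U t * f * V t * (U t * H 0 * V t)
        = U t * f * (V t * U t) * H 0 * V t := by noncomm_ring
      _ = _ := by rw [hVU]; noncomm_ring
  rw [e1, e2]
  show U t * (H 0 * f) * V t - ε • (U t * (f * H 0) * V t)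
      = U t * (H 0 * f - ε • (f * H 0)) * V t
  rw [mul_sub, sub_mul, mul_smul_comm, smul_mul_assoc]
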